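/- Let f be a complex polynomial of degree n ≥ 2 with n distinct simple roots z₁, ..., zₙ. If f'(zₖ) is purely imaginary (and nonzero) for each k = 1, ..., n−1, then f'(zₙ) is also purely imaginary and nonzero. -/
import Mathlib

open Polynomial Finset

theorem deriv_eval_eq (n : ℕ) (f : Polynomial ℂ)
    (hdeg : f.natDegree = n)
    (z : Fin n → ℂ) (hinj : Function.Injective z)
    (hroot : ∀ k, f.eval (z k) = 0) (hf0 : f ≠ 0) :
    ∀ k, f.derivative.eval (z k) =
      f.leadingCoeff * ∏ j ∈ univ.erase k, (z k - z j) := by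
  classical
  set c := f.leadingCoeff with hc
  have hle : (Finset.univ.val.map z : Multiset ℂ) ≤ f.roots := by
    rw [Multiset.le_iff_subset ((Finset.univ.nodup.map hinj))]
    intro a ha
    obtain ⟨k, _, rfl⟩ := Multiset.mem_map.mp ha
    rw [mem_roots hf0]
    exact hroot k
  have hcard : Multiset.card (Finset.univ.val.map z) = n := by simp
  have hroots : f.roots = Finset.univ.val.map z := by
    refine (Multiset.eq_of_le_of_card_le hle ?_).symm
    rw [hcard]
    calc Multiset.card f.roots ≤ f.natDegree := f.card_roots'
    _ = n := hdeg
  have hfeq : f = Polynomial.C c * ∏ j, (X - C (z j)) := by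
    have h := C_leadingCoeff_mul_prod_multiset_X_sub_C
      (p := f) (by rw [hroots, hcard, hdeg])
    rw [hroots, Multiset.map_map] at h
    rw [← h, Finset.prod_eq_multiset_prod]
    rfl
  intro k
  have hsplit : f = (X - C (z k)) * (Polynomial.C c * ∏ j ∈ univ.erase k, (X - C (z j))) := by
    rw [hfeq, ← Finset.mul_prod_erase _ _ (Finset.mem_univ k)]
    ring
  rw [hsplit, derivative_mul, derivative_sub, derivative_X, derivative_C]
  simp [eval_prod]

theorem sum_inv_eq_zero (n : ℕ) (hn : 2 ≤ n) (z : Fin n → ℂ) (hinj : Function.Injective z) :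
    ∑ k : Fin n, ∏ j ∈ univ.erase k, (z k - z j)⁻¹ = 0 := by
  classical
  have hsum := Lagrange.sum_basis (v := z) (s := univ) hinj.injOn
    ⟨⟨0, by omega⟩, mem_univ _⟩
  have h := congrArg (fun p => Polynomial.coeff p (n - 1)) hsum
  simp only [Polynomial.finset_sum_coeff, Polynomial.coeff_one] at h
  have hne : n - 1 ≠ 0 := by omega
  rw [if_neg (by omega : ¬ (n - 1 = 0))] at h
  rw [← h]
  refine Finset.sum_congr rfl fun k _ => ?_
  have hbasis : Lagrange.basis univ z k = ∏ j ∈ univ.erase k,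
      (Polynomial.C (z k - z j)⁻¹ * (X - C (z j))) := rfl
  have hdeg : (Lagrange.basis univ z k).natDegree = n - 1 := by
    have := Lagrange.natDegree_basis (v := z) hinj.injOn (mem_univ k)
    simpa using this
  rw [← hdeg]
  rw [← Polynomial.leadingCoeff]
  rw [hbasis, Polynomial.leadingCoeff_prod]
  refine Finset.prod_congr rfl fun j hj => ?_
  rw [Polynomial.leadingCoeff_mul, Polynomial.leadingCoeff_C,
    Polynomial.leadingCoeff_X_sub_C, mul_one]

theorem last_deriv_purely_imaginary
    (n : ℕ) (hn : 2 ≤ n) (f : Polynomial ℂ)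
    (hdeg : f.natDegree = n)
    (z : Fin n → ℂ) (hinj : Function.Injective z)
    (hroot : ∀ k, f.eval (z k) = 0)
    (hsimple : ∀ k, f.derivative.eval (z k) ≠ 0)
    (him : ∀ k : Fin n, (k : ℕ) < n - 1 → (f.derivative.eval (z k)).re = 0) :
    ∀ k : Fin n, (k : ℕ) = n - 1 →
      (f.derivative.eval (z k)).re = 0 ∧ f.derivative.eval (z k) ≠ 0 := by
  classical
  intro k hk
  refine ⟨?_, hsimple k⟩
  set w : Fin n → ℂ := fun j => f.derivative.eval (z j) with hw
  have hf0 : f ≠ 0 := by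
    intro h; rw [h, natDegree_zero] at hdeg; omega
  have hc : f.leadingCoeff ≠ 0 := Polynomial.leadingCoeff_ne_zero.mpr hf0
  have hval := deriv_eval_eq n f hdeg z hinj hroot hf0
  -- ∑ (w j)⁻¹ = 0
  have hsum : ∑ j : Fin n, (w j)⁻¹ = 0 := by
    have h0 := sum_inv_eq_zero n hn z hinj
    have : ∀ j : Fin n, (w j)⁻¹ =
        f.leadingCoeff⁻¹ * ∏ i ∈ univ.erase j, (z j - z i)⁻¹ := by
      intro j
      show (f.derivative.eval (z j))⁻¹ = _
      rw [hval j, mul_inv, ← Finset.prod_inv_distrib]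
    simp_rw [this, ← Finset.mul_sum, h0, mul_zero]
  have hre : ∀ j : Fin n, j ≠ k → ((w j)⁻¹).re = 0 := by
    intro j hj
    have hjlt : (j : ℕ) < n - 1 := by
      have := j.isLt
      have hne : (j : ℕ) ≠ n - 1 := fun h => hj (Fin.ext (h.trans hk.symm))
      omega
    rw [Complex.inv_re, him j hjlt, zero_div]
  have hre0 : ((w k)⁻¹).re = 0 := by
    have := congrArg Complex.re hsum
    rw [Complex.re_sum, ← Finset.add_sum_erase _ _ (mem_univ k)] at this
    rw [Finset.sum_eq_zero (fun j hj => hre j (mem_erase.mp hj).1), add_zero] at this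
    exact this
  rw [Complex.inv_re, _root_.div_eq_zero_iff] at hre0
  rcases hre0 with h | h
  · exact h
  · exact absurd (Complex.normSq_eq_zero.mp h) (hsimple k)
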